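/- Every isomorphism of full Hilbert C*-modules preserves norms: if Ψ : X → Y is a bijective map between a full Hilbert A-module X and a Hilbert B-module Y such that ⟨Ψ(x),Ψ(y)⟩ = ψ(⟨x,y⟩) for all x,y ∈ X for some *-homomorphism ψ : A → B, and Ψ⁻¹ is likewise a morphism, then ‖Ψ(x)‖ = ‖x‖ for all x ∈ X, and the underlying *-homomorphism ψ is an isomorphism onto ⟨Y,Y⟩ uniquely determined by Ψ. -/
import Mathlib


noncomputable section

open ContinuousLinearMap

open scoped CStarAlgebra in
/-- A non-unital star algebra hom between C⋆-algebras as a continuous linear map. -/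
def nusahCLM {A B : Type*} [NonUnitalCStarAlgebra A] [NonUnitalCStarAlgebra B]
    (φ : A →⋆ₙₐ[ℂ] B) : A →L[ℂ] B :=
  { toFun := φ
    map_add' := map_add φ
    map_smul' := map_smul φ
    cont := map_continuous φ }

theorem stmt_19_aux
    {A : Type*} [CStarAlgebra A] {B : Type*} [CStarAlgebra B]
    {X Y : Type*} (EA : X → X → A) (EB : Y → Y → B)
    (hfull : (Submodule.span ℂ {a : A | ∃ x y, a = EA x y}).topologicalClosure = ⊤)
    (Ψ : X → Y) (Ψinv : Y → X)
    (hinv₁ : ∀ x, Ψinv (Ψ x) = x) (hinv₂ : ∀ y, Ψ (Ψinv y) = y)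
    (ψ : A →⋆ₙₐ[ℂ] B) (hψ : ∀ x y, EB (Ψ x) (Ψ y) = ψ (EA x y))
    (χ : B →⋆ₙₐ[ℂ] A) (hχ : ∀ y₁ y₂, EA (Ψinv y₁) (Ψinv y₂) = χ (EB y₁ y₂)) :
    (∀ x, ‖EB (Ψ x) (Ψ x)‖ = ‖EA x x‖) ∧
      Function.Injective ψ ∧
      Set.range ψ =
        ((Submodule.span ℂ {b : B | ∃ y₁ y₂, b = EB y₁ y₂}).topologicalClosure : Set B) ∧
      ∀ ψ' : A →⋆ₙₐ[ℂ] B, (∀ x y, EB (Ψ x) (Ψ y) = ψ' (EA x y)) → ψ' = ψ := by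
  set SA : Set A := {a : A | ∃ x y, a = EA x y} with hSA
  set SB : Set B := {b : B | ∃ y₁ y₂, b = EB y₁ y₂} with hSB
  have hdA : Dense (Submodule.span ℂ SA : Set A) := by
    rw [← Submodule.dense_iff_topologicalClosure_eq_top] at hfull
    exact hfull
  -- χ ∘ ψ = id
  have hχψ : ∀ a, χ (ψ a) = a := by
    have : nusahCLM (χ.comp ψ) = ContinuousLinearMap.id ℂ A := by
      refine ContinuousLinearMap.ext_on hdA ?_
      rintro a ⟨x, y, rfl⟩
      show χ (ψ (EA x y)) = EA x y
      rw [← hψ, ← hχ, hinv₁, hinv₁]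
    intro a
    exact DFunLike.congr_fun this a
  -- ψ ∘ χ = id on SB and its closed span
  have hψχS : ∀ b ∈ SB, ψ (χ b) = b := by
    rintro b ⟨y₁, y₂, rfl⟩
    rw [← hχ, ← hψ, hinv₂, hinv₂]
  have hψχ : ∀ b ∈ (Submodule.span ℂ SB).topologicalClosure, ψ (χ b) = b := by
    intro b hb
    have hb' : b ∈ closure (Submodule.span ℂ SB : Set B) := hb
    have heq : Set.EqOn (fun c => ψ (χ c)) id (Submodule.span ℂ SB : Set B) := by
      intro c hc
      induction hc using Submodule.span_induction with
      | mem c hc => exact hψχS c hc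
      | zero => simp
      | add c d _ _ hc hd =>
          show ψ (χ (c + d)) = c + d
          rw [map_add, map_add, show ψ (χ c) = c from hc, show ψ (χ d) = d from hd]
      | smul r c _ hc =>
          show ψ (χ (r • c)) = r • c
          rw [map_smul, map_smul, show ψ (χ c) = c from hc]
    exact heq.closure ((nusahCLM ψ).continuous.comp (nusahCLM χ).continuous) continuous_id hb'
  have hinj : Function.Injective ψ := by
    intro a b hab
    have := congrArg χ hab
    rwa [hχψ, hχψ] at this
  refine ⟨?_, hinj, ?_, ?_⟩
  · intro x
    rw [hψ]
    refine le_antisymm (NonUnitalStarAlgHom.norm_apply_le ψ _) ?_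
    calc ‖EA x x‖ = ‖χ (ψ (EA x x))‖ := by rw [hχψ]
      _ ≤ ‖ψ (EA x x)‖ := NonUnitalStarAlgHom.norm_apply_le χ _
  · apply le_antisymm
    · rintro _ ⟨a, rfl⟩
      have ha : a ∈ (Submodule.span ℂ SA).topologicalClosure := by rw [hfull]; trivial
      have ha' : a ∈ closure (Submodule.span ℂ SA : Set A) := ha
      have hmaps : Set.MapsTo ψ (Submodule.span ℂ SA : Set A)
          ((Submodule.span ℂ SB).topologicalClosure : Set B) := by
        intro c hc
        induction hc using Submodule.span_induction with
        | mem c hc =>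
            obtain ⟨x, y, rfl⟩ := hc
            exact Submodule.le_topologicalClosure _ <|
              Submodule.subset_span ⟨Ψ x, Ψ y, (hψ x y).symm⟩
        | zero => rw [map_zero]; exact subset_closure (Submodule.zero_mem _)
        | add c d _ _ hc hd => rw [map_add]; exact Submodule.add_mem _ hc hd
        | smul r c _ hc => rw [map_smul]; exact Submodule.smul_mem _ _ hc
      have h2 : ψ a ∈ closure (((Submodule.span ℂ SB).topologicalClosure : Submodule ℂ B) :
          Set B) := (hmaps.closure (nusahCLM ψ).continuous) ha'
      rwa [IsClosed.closure_eq (Submodule.isClosed_topologicalClosure _)] at h2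
    · intro b hb
      exact ⟨χ b, hψχ b hb⟩
  · intro ψ' hψ'
    have : nusahCLM ψ' = nusahCLM ψ := by
      refine ContinuousLinearMap.ext_on hdA ?_
      rintro a ⟨x, y, rfl⟩
      show ψ' (EA x y) = ψ (EA x y)
      rw [← hψ, ← hψ']
    ext a
    exact DFunLike.congr_fun this a

/-- an isomorphism of Hilbert `C*`-modules from a full Hilbert
`A`-module `X` onto a Hilbert `B`-module `Y` preserves norms
(`‖Ψ(x)‖ = ‖x‖`, i.e. `‖⟨Ψx,Ψx⟩‖ = ‖⟨x,x⟩‖`), and its underlying `*`-morphism `ψ`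
is injective, has range the closed span `⟨Y,Y⟩`, and is uniquely determined by `Ψ`. -/
theorem stmt_19
    {A : Type*} [NormedRing A] [StarRing A] [CStarRing A] [NormedAlgebra ℂ A]
    [CompleteSpace A] [StarModule ℂ A]
    {B : Type*} [NormedRing B] [StarRing B] [CStarRing B] [NormedAlgebra ℂ B]
    [CompleteSpace B] [StarModule ℂ B]
    {X Y : Type*} (EA : X → X → A) (EB : Y → Y → B)
    (hfull : (Submodule.span ℂ {a : A | ∃ x y, a = EA x y}).topologicalClosure = ⊤)
    (Ψ : X → Y) (Ψinv : Y → X)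
    (hinv₁ : ∀ x, Ψinv (Ψ x) = x) (hinv₂ : ∀ y, Ψ (Ψinv y) = y)
    (ψ : A →⋆ₙₐ[ℂ] B) (hψ : ∀ x y, EB (Ψ x) (Ψ y) = ψ (EA x y))
    (χ : B →⋆ₙₐ[ℂ] A) (hχ : ∀ y₁ y₂, EA (Ψinv y₁) (Ψinv y₂) = χ (EB y₁ y₂)) :
    (∀ x, ‖EB (Ψ x) (Ψ x)‖ = ‖EA x x‖) ∧
      Function.Injective ψ ∧
      Set.range ψ =
        ((Submodule.span ℂ {b : B | ∃ y₁ y₂, b = EB y₁ y₂}).topologicalClosure : Set B) ∧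
      ∀ ψ' : A →⋆ₙₐ[ℂ] B, (∀ x y, EB (Ψ x) (Ψ y) = ψ' (EA x y)) → ψ' = ψ := by
  letI : CStarAlgebra A := ⟨⟩
  letI : CStarAlgebra B := ⟨⟩
  exact stmt_19_aux EA EB hfull Ψ Ψinv hinv₁ hinv₂ ψ hψ χ hχ
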